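/- Under Assumptions 1–5, the remainder R_n(θ) of the quadratic expansion of Q_n(θ) := −(n/2) m̄_n(θ)ᵀ W_n(θ)^{-1} m̄_n(θ) around θ_⋆ satisfies: for each ε > 0 there exist a sufficiently small δ > 0 and a sufficiently large h > 0 such that limsup_{n→∞} P_0^{(n)}[ sup_{h/√n ≤ ‖θ−θ_⋆‖ ≤ δ} |R_n(θ)| / (1 + n‖θ−θ_⋆‖²) > ε ] < ε, and limsup_{n→∞} P_0^{(n)}[ sup_{‖θ−θ_⋆‖ ≤ h/√n} |R_n(θ)| > ε ] = 0. -/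

import Mathlib

open MeasureTheory Filter Matrix
open scoped Topology ENNReal NNReal BigOperators

set_option maxHeartbeats 1000000

noncomputable section

namespace QPaper

abbrev Vec (d : ℕ) := EuclideanSpace ℝ (Fin d)
abbrev Mat (d : ℕ) := Matrix (Fin d) (Fin d) ℝ

variable {d : ℕ} {Ω : Type*} [MeasurableSpace Ω]

/-- The bilinear form `xᵀ A y`. -/
def quadForm (A : Mat d) (x y : Vec d) : ℝ := ∑ i, ∑ j, x i * A i j * y j

/-- The continuous linear map on Euclidean space induced by a matrix. -/
def matCLM (A : Mat d) : Vec d →L[ℝ] Vec d :=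
  LinearMap.toContinuousLinearMap (Matrix.toEuclideanLin A)

/-- Density at `x` of the centred Gaussian on `ℝ^d` with *precision* matrix `prec`,
i.e. the density `N(x; 0, prec⁻¹)`. -/
def gaussPDF (prec : Mat d) (x : Vec d) : ℝ :=
  (2 * Real.pi) ^ (-(d : ℝ) / 2) * Real.sqrt prec.det * Real.exp (-quadForm prec x x / 2)

/-- The centred Gaussian measure on `ℝ^d` with precision matrix `prec`. -/
def gaussMeasure (prec : Mat d) : Measure (Vec d) :=
  volume.withDensity fun x => ENNReal.ofReal (gaussPDF prec x)

/-- `X n → 0` in probability under the sequence of laws `P n` (i.e. `X n = o_p(1)`). -/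
def TendstoInProb (P : ℕ → Measure Ω) (X : ℕ → Ω → ℝ) : Prop :=
  ∀ ε : ℝ, 0 < ε → Tendsto (fun n => P n {ω | ε ≤ |X n ω|}) atTop (𝓝 0)

/-- `X n` is bounded in probability under the laws `P n` (i.e. `X n = O_p(1)`). -/
def BoundedInProb (P : ℕ → Measure Ω) (X : ℕ → Ω → ℝ) : Prop :=
  ∀ ε : ℝ, 0 < ε → ∃ M : ℝ, 0 < M ∧
    ∀ᶠ n in atTop, P n {ω | M ≤ |X n ω|} ≤ ENNReal.ofReal ε

/-- Convergence in distribution of `X n` (under the law `P n`) to the measure `μ`. -/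
def TendstoInDist (P : ℕ → Measure Ω) (X : ℕ → Ω → Vec d) (μ : Measure (Vec d)) : Prop :=
  ∀ f : BoundedContinuousFunction (Vec d) ℝ,
    Tendsto (fun n => ∫ ω, f (X n ω) ∂P n) atTop (𝓝 (∫ x, f x ∂μ))

/-- The criterion `Q_n(θ) = (1/2) m̄_n(θ)ᵀ W_n(θ)⁻¹ m̄_n(θ)`. -/
def Qcrit (Wn : Vec d → Mat d) (mb : Vec d → Vec d) (θ : Vec d) : ℝ :=
  (1 / 2) * quadForm (Wn θ)⁻¹ (mb θ) (mb θ)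

/-- The unnormalised Q-posterior kernel `|W_n(θ)|^{-1/2} e^{-n Q_n(θ)} π(θ)`. -/
def QKernel (Wn : Vec d → Mat d) (mb : Vec d → Vec d) (pr : Vec d → ℝ) (n : ℕ)
    (θ : Vec d) : ℝ :=
  (Real.sqrt (Wn θ).det)⁻¹ * Real.exp (-(n : ℝ) * Qcrit Wn mb θ) * pr θ

/-- The Q-posterior density `π(θ ∣ 𝒬_n)`. -/
def QPostDens (Θ : Set (Vec d)) (Wn : Vec d → Mat d) (mb : Vec d → Vec d) (pr : Vec d → ℝ)
    (n : ℕ) (θ : Vec d) : ℝ :=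
  QKernel Wn mb pr n θ / ∫ ϑ in Θ, QKernel Wn mb pr n ϑ

/-- The sandwich matrix `Δ(θ) = H(θ)ᵀ W(θ)⁻¹ H(θ)`. -/
def sandwich (W H : Vec d → Mat d) (θ : Vec d) : Mat d := (H θ)ᵀ * (W θ)⁻¹ * H θ

/-- Assumption 1 of the paper: uniform LLN for the score, an interior root `θ⋆` of the
limit score `m`, smoothness of `m` near `θ⋆` with derivative `-H`, invertibility of
`H(θ⋆)`, a CLT for `√n m̄_n(θ⋆)` with positive-definite asymptotic variance `I⋆`, and
stochastic equicontinuity of the score process. -/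
structure Assumption1 (P : ℕ → Measure Ω) (Θ : Set (Vec d))
    (mbar : ℕ → Ω → Vec d → Vec d) (m : Vec d → Vec d) (θstar : Vec d)
    (H : Vec d → Mat d) (Istar : Mat d) : Prop where
  unif_lln : ∀ ε : ℝ, 0 < ε →
    Tendsto (fun n => P n {ω | ∃ θ ∈ Θ, ε ≤ ‖mbar n ω θ - m θ‖}) atTop (𝓝 0)
  mem_interior : θstar ∈ interior Θ
  is_root : m θstar = 0
  smooth : ∃ δ : ℝ, 0 < δ ∧
    (∀ θ : Vec d, ‖θ - θstar‖ ≤ δ → HasFDerivAt m (-matCLM (H θ)) θ) ∧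
    ContinuousOn H {θ | ‖θ - θstar‖ ≤ δ}
  Hstar_inv : IsUnit (H θstar).det
  Istar_posdef : Istar.PosDef
  clt : TendstoInDist P (fun n ω => Real.sqrt n • mbar n ω θstar) (gaussMeasure Istar⁻¹)
  equicont : ∀ ε : ℝ, 0 < ε → ∃ δ : ℝ, 0 < δ ∧
    limsup (fun n => P n {ω | ∃ θ : Vec d, ‖θ - θstar‖ < δ ∧
        ε ≤ Real.sqrt n * ‖mbar n ω θ - mbar n ω θstar - (m θ - m θstar)‖ /
            (1 + Real.sqrt n * ‖θ - θstar‖)}) atTop < ENNReal.ofReal ε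

/-- Assumption 2 of the paper: regularity of the random weight matrices `W_n` and of
their uniform-in-probability limit `W`, together with the identification condition. -/
structure Assumption2 (P : ℕ → Measure Ω) (Θ : Set (Vec d))
    (Wn : ℕ → Ω → Vec d → Mat d) (W : Vec d → Mat d)
    (m : Vec d → Vec d) (θstar : Vec d) : Prop where
  regular : ∃ δ : ℝ, 0 < δ ∧
    (∀ᶠ n in atTop, ∀ ω : Ω, (∀ θ ∈ Θ, (Wn n ω θ).PosSemidef) ∧
      ∀ θ : Vec d, ‖θ - θstar‖ ≤ δ → (Wn n ω θ).PosDef) ∧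
    (∀ θ ∈ Θ, (W θ).PosSemidef) ∧
    (∀ ε : ℝ, 0 < ε →
      Tendsto (fun n => P n {ω | ∃ θ ∈ Θ, ∃ i j, ε ≤ |Wn n ω θ i j - W θ i j|})
        atTop (𝓝 0)) ∧
    ContinuousOn W {θ | ‖θ - θstar‖ ≤ δ} ∧
    ∀ θ : Vec d, ‖θ - θstar‖ ≤ δ → (W θ).PosDef
  ident : ∀ ε : ℝ, 0 < ε → ∃ c : ℝ, 0 < c ∧
    ∀ θ ∈ Θ, ε ≤ ‖θ - θstar‖ → c ≤ quadForm (W θ)⁻¹ (m θ) (m θ)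

/-- Assumption 3 of the paper: regularity and moment conditions on the prior `pr`. -/
structure Assumption3 (Θ : Set (Vec d)) (Wn : ℕ → Ω → Vec d → Mat d)
    (pr : Vec d → ℝ) (θstar : Vec d) : Prop where
  prior_pos : 0 < pr θstar
  prior_cont : ContinuousOn pr Θ
  moments : ∃ p : ℝ, 1 ≤ p ∧
    IntegrableOn (fun θ => ‖θ‖ ^ p * pr θ) Θ ∧
    ∀ᶠ n in atTop, ∀ ω : Ω,
      IntegrableOn (fun θ => (Real.sqrt (Wn n ω θ).det)⁻¹ * ‖θ - θstar‖ ^ p * pr θ) Θ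

/-- Assumption 4 of the paper: the set `Θ⋆` of roots of the limit score is finite, and
at least one root has its sandwich matrix with smallest eigenvalue in `(δ, 1/δ]`. -/
structure Assumption4 (Θ : Set (Vec d)) (m : Vec d → Vec d)
    (W H : Vec d → Mat d) : Prop where
  finite_roots : {θ | θ ∈ interior Θ ∧ m θ = 0}.Finite
  eigen : ∃ δ : ℝ, 0 < δ ∧ ∃ θ, θ ∈ interior Θ ∧ m θ = 0 ∧
    (∀ x : Vec d, x ≠ 0 → δ * ‖x‖ ^ 2 < quadForm (sandwich W H θ) x x) ∧
    ∃ x : Vec d, x ≠ 0 ∧ quadForm (sandwich W H θ) x x ≤ δ⁻¹ * ‖x‖ ^ 2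

/-- Assumption 5 of the paper: `θ_n` is a root of the sample score equations and is
consistent for `θ⋆`. -/
structure Assumption5 (P : ℕ → Measure Ω) (mbar : ℕ → Ω → Vec d → Vec d)
    (θn : ℕ → Ω → Vec d) (θstar : Vec d) : Prop where
  root : ∀ n ω, mbar n ω (θn n ω) = 0
  consistent : TendstoInProb P fun n ω => ‖θn n ω - θstar‖


/-- Sum of absolute values of the entries. -/
def Msum (A : Mat d) : ℝ := ∑ i, ∑ j, |A i j|

lemma Msum_nonneg (A : Mat d) : 0 ≤ Msum A :=
  Finset.sum_nonneg fun _ _ => Finset.sum_nonneg fun _ _ => abs_nonneg _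

lemma abs_coord_le_norm' {ι : Type*} [Fintype ι] (x : EuclideanSpace ℝ ι) (i : ι) :
    |x i| ≤ ‖x‖ := by
  rw [EuclideanSpace.norm_eq, ← Real.sqrt_sq_eq_abs]
  apply Real.sqrt_le_sqrt
  have h : x i ^ 2 ≤ ∑ j, ‖x j‖ ^ 2 := by
    have := Finset.single_le_sum (f := fun j => ‖x j‖ ^ 2)
      (fun j _ => by positivity) (Finset.mem_univ i)
    simpa [Real.norm_eq_abs, sq_abs] using this
  exact h

lemma norm_le_sum_abs' {ι : Type*} [Fintype ι] (x : EuclideanSpace ℝ ι) :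
    ‖x‖ ≤ ∑ i, |x i| := by
  rw [EuclideanSpace.norm_eq]
  have h0 : 0 ≤ ∑ i, |x i| := Finset.sum_nonneg fun _ _ => abs_nonneg _
  have h1 : ∑ i, ‖x i‖ ^ 2 ≤ (∑ i, |x i|) ^ 2 := by
    have : ∀ i ∈ Finset.univ, ‖x i‖ ^ 2 ≤ |x i| * (∑ j, |x j|) := by
      intro i _
      rw [Real.norm_eq_abs, sq]
      exact mul_le_mul_of_nonneg_left
        (Finset.single_le_sum (f := fun j => |x j|) (fun j _ => abs_nonneg _)
          (Finset.mem_univ i)) (abs_nonneg _)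
    calc ∑ i, ‖x i‖ ^ 2 ≤ ∑ i, |x i| * (∑ j, |x j|) := Finset.sum_le_sum this
      _ = (∑ i, |x i|) ^ 2 := by rw [← Finset.sum_mul, sq]
  calc Real.sqrt (∑ i, ‖x i‖ ^ 2) ≤ Real.sqrt ((∑ i, |x i|) ^ 2) := Real.sqrt_le_sqrt h1
    _ = ∑ i, |x i| := Real.sqrt_sq h0

lemma abs_quadForm_le (A : Mat d) (x y : Vec d) :
    |quadForm A x y| ≤ Msum A * (‖x‖ * ‖y‖) := by
  unfold quadForm Msum
  calc |∑ i, ∑ j, x i * A i j * y j| ≤ ∑ i, ∑ j, |x i * A i j * y j| :=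
        (Finset.abs_sum_le_sum_abs _ _).trans
          (Finset.sum_le_sum fun i _ => Finset.abs_sum_le_sum_abs _ _)
    _ ≤ ∑ i, ∑ j, |A i j| * (‖x‖ * ‖y‖) := by
        refine Finset.sum_le_sum fun i _ => Finset.sum_le_sum fun j _ => ?_
        rw [abs_mul, abs_mul]
        calc |x i| * |A i j| * |y j| ≤ ‖x‖ * |A i j| * ‖y‖ := by
              have hx := abs_coord_le_norm' x i
              have hy := abs_coord_le_norm' y j
              exact mul_le_mul (mul_le_mul hx le_rfl (abs_nonneg _) (norm_nonneg x)) hy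
                (abs_nonneg _) (by positivity)
          _ = |A i j| * (‖x‖ * ‖y‖) := by ring
    _ = (∑ i, ∑ j, |A i j|) * (‖x‖ * ‖y‖) := by
        rw [Finset.sum_mul]
        exact Finset.sum_congr rfl fun i _ => by rw [Finset.sum_mul]

def mulv (A : Mat d) (x : Vec d) : Vec d := WithLp.toLp 2 (fun i => ∑ j, A i j * x j)

lemma mulv_apply (A : Mat d) (x : Vec d) (i : Fin d) : mulv A x i = ∑ j, A i j * x j := rfl

lemma norm_mulv_le (A : Mat d) (x : Vec d) : ‖mulv A x‖ ≤ Msum A * ‖x‖ := by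
  calc ‖mulv A x‖ ≤ ∑ i, |mulv A x i| := norm_le_sum_abs' _
    _ ≤ ∑ i, ∑ j, |A i j| * ‖x‖ := by
        refine Finset.sum_le_sum fun i _ => ?_
        calc |mulv A x i| ≤ ∑ j, |A i j * x j| := by
                rw [mulv_apply]; exact Finset.abs_sum_le_sum_abs _ _
          _ ≤ ∑ j, |A i j| * ‖x‖ := by
              refine Finset.sum_le_sum fun j _ => ?_
              rw [abs_mul]
              exact mul_le_mul_of_nonneg_left (abs_coord_le_norm' x j) (abs_nonneg _)
    _ = Msum A * ‖x‖ := by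
        rw [Msum, Finset.sum_mul]
        exact Finset.sum_congr rfl fun i _ => by rw [Finset.sum_mul]

lemma quadForm_add_right (A : Mat d) (x y z : Vec d) :
    quadForm A x (y + z) = quadForm A x y + quadForm A x z := by
  simp [quadForm, PiLp.add_apply, mul_add, Finset.sum_add_distrib]

lemma quadForm_add_left (A : Mat d) (x y z : Vec d) :
    quadForm A (x + y) z = quadForm A x z + quadForm A y z := by
  simp [quadForm, PiLp.add_apply, add_mul, Finset.sum_add_distrib]

lemma quadForm_sub_right (A : Mat d) (x y z : Vec d) :
    quadForm A x (y - z) = quadForm A x y - quadForm A x z := by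
  simp [quadForm, PiLp.sub_apply, mul_sub, Finset.sum_sub_distrib]

lemma quadForm_sub_left (A : Mat d) (x y z : Vec d) :
    quadForm A (x - y) z = quadForm A x z - quadForm A y z := by
  simp [quadForm, PiLp.sub_apply, sub_mul, Finset.sum_sub_distrib]

lemma quadForm_smul_left (A : Mat d) (c : ℝ) (x y : Vec d) :
    quadForm A (c • x) y = c * quadForm A x y := by
  simp [quadForm, PiLp.smul_apply, smul_eq_mul, Finset.mul_sum]
  exact Finset.sum_congr rfl fun i _ => Finset.sum_congr rfl fun j _ => by ring

lemma quadForm_smul_right (A : Mat d) (c : ℝ) (x y : Vec d) :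
    quadForm A x (c • y) = c * quadForm A x y := by
  simp [quadForm, PiLp.smul_apply, smul_eq_mul, Finset.mul_sum]
  exact Finset.sum_congr rfl fun i _ => Finset.sum_congr rfl fun j _ => by ring

lemma quadForm_matsub (A B : Mat d) (x y : Vec d) :
    quadForm (A - B) x y = quadForm A x y - quadForm B x y := by
  simp [quadForm, Matrix.sub_apply, mul_sub, sub_mul, Finset.sum_sub_distrib]

lemma sum_rot {α : Type*} [Fintype α] (f : α → α → α → ℝ) :
    ∑ i, ∑ j, ∑ k, f i j k = ∑ k, ∑ j, ∑ i, f i j k := by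
  calc ∑ i, ∑ j, ∑ k, f i j k
      = ∑ j, ∑ i, ∑ k, f i j k := Finset.sum_comm
    _ = ∑ j, ∑ k, ∑ i, f i j k :=
        Finset.sum_congr rfl fun j _ => Finset.sum_comm
    _ = ∑ k, ∑ j, ∑ i, f i j k := Finset.sum_comm

lemma quadForm_transpose_mul (A C : Mat d) (x y : Vec d) :
    quadForm (Aᵀ * C) x y = quadForm C (mulv A x) y := by
  have L : quadForm (Aᵀ * C) x y = ∑ i, ∑ j, ∑ k, x i * A k i * C k j * y j := by
    unfold quadForm
    refine Finset.sum_congr rfl fun i _ => Finset.sum_congr rfl fun j _ => ?_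
    rw [Matrix.mul_apply, Finset.mul_sum, Finset.sum_mul]
    exact Finset.sum_congr rfl fun k _ => by rw [Matrix.transpose_apply]; ring
  have R : quadForm C (mulv A x) y = ∑ k, ∑ j, ∑ i, x i * A k i * C k j * y j := by
    simp only [quadForm, mulv_apply]
    refine Finset.sum_congr rfl fun k _ => Finset.sum_congr rfl fun j _ => ?_
    rw [Finset.sum_mul, Finset.sum_mul]
    exact Finset.sum_congr rfl fun i _ => by ring
  rw [L, R, sum_rot]

lemma quadForm_mul_right (C D : Mat d) (x y : Vec d) :
    quadForm (C * D) x y = quadForm C x (mulv D y) := by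
  have L : quadForm (C * D) x y = ∑ i, ∑ j, ∑ k, x i * C i k * D k j * y j := by
    unfold quadForm
    refine Finset.sum_congr rfl fun i _ => Finset.sum_congr rfl fun j _ => ?_
    rw [Matrix.mul_apply, Finset.mul_sum, Finset.sum_mul]
    exact Finset.sum_congr rfl fun k _ => by ring
  have R : quadForm C x (mulv D y) = ∑ i, ∑ k, ∑ j, x i * C i k * D k j * y j := by
    simp only [quadForm, mulv_apply]
    refine Finset.sum_congr rfl fun i _ => Finset.sum_congr rfl fun k _ => ?_
    rw [Finset.mul_sum]
    exact Finset.sum_congr rfl fun j _ => by ring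
  rw [L, R]
  exact Finset.sum_congr rfl fun i _ => Finset.sum_comm

lemma quadForm_comm {A : Mat d} (h : Aᵀ = A) (x y : Vec d) :
    quadForm A x y = quadForm A y x := by
  unfold quadForm
  rw [Finset.sum_comm]
  refine Finset.sum_congr rfl fun j _ => Finset.sum_congr rfl fun i _ => ?_
  have : A j i = A i j := by
    calc A j i = Aᵀ i j := (Matrix.transpose_apply A i j).symm
      _ = A i j := by rw [h]
  rw [this]; ring

lemma mulv_smul (A : Mat d) (c : ℝ) (x : Vec d) : mulv A (c • x) = c • mulv A x := by
  ext i
  simp [mulv_apply, PiLp.smul_apply, smul_eq_mul, Finset.mul_sum]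
  exact Finset.sum_congr rfl fun j _ => by ring



lemma quadForm_expand_identity (B Hs Aθ Astar : Mat d) (hB : Bᵀ = B) (z u w : Vec d) :
    (-(1/2) * quadForm Aθ (z + (w - mulv Hs u)) (z + (w - mulv Hs u))
      + (1/2) * quadForm Astar z z)
    - quadForm (Hsᵀ * B) u z + (1/2) * quadForm (Hsᵀ * B * Hs) u u
    = -(1/2) * quadForm (Aθ - B) (z + (w - mulv Hs u)) (z + (w - mulv Hs u))
      + (1/2) * quadForm (Astar - B) z z
      - (1/2) * (quadForm B z w + quadForm B w z)
      + (1/2) * (quadForm B w (mulv Hs u) + quadForm B (mulv Hs u) w)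
      - (1/2) * quadForm B w w := by
  have h1 : quadForm (Hsᵀ * B) u z = quadForm B (mulv Hs u) z :=
    quadForm_transpose_mul ..
  have h2 : quadForm (Hsᵀ * B * Hs) u u = quadForm B (mulv Hs u) (mulv Hs u) := by
    rw [Matrix.mul_assoc, quadForm_transpose_mul, quadForm_mul_right]
  have hc : quadForm B z (mulv Hs u) = quadForm B (mulv Hs u) z := quadForm_comm hB _ _
  simp only [quadForm_matsub, quadForm_add_left, quadForm_add_right, quadForm_sub_left,
    quadForm_sub_right, h1, h2, hc]
  ring

lemma poly_bound {M κ σ CB CH nu : ℝ} (hM : 0 ≤ M) (hκ0 : 0 ≤ κ) (hσ0 : 0 ≤ σ)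
    (hσ2 : σ ≤ 2) (hCB0 : 0 ≤ CB) (hCH0 : 0 ≤ CH) (hnu0 : 0 ≤ nu) :
    (1/2)*(κ*((M+CH+2)*(1+nu))^2) + (1/2)*(κ*M^2) + CB*(M*(σ*(1+nu)))
      + CB*((σ*(1+nu))*(CH*nu)) + (1/2)*(CB*((σ*(1+nu))*(σ*(1+nu))))
    ≤ (κ+σ)*((M+CH+2)^2+M^2+CB*(M+CH+2))*(1+nu)^2 := by
  have hq1 : (1:ℝ) ≤ 1 + nu := by linarith
  have hq0 : (0:ℝ) ≤ 1 + nu := by linarith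
  have hq2 : (1:ℝ) ≤ (1+nu)^2 := by nlinarith
  have hP0 : (0:ℝ) ≤ M + CH + 2 := by linarith
  have t1 : (1/2)*(κ*((M+CH+2)*(1+nu))^2) ≤ κ*(M+CH+2)^2*(1+nu)^2 := by
    nlinarith [mul_nonneg hκ0 (mul_nonneg (mul_nonneg hP0 hP0) (mul_nonneg hq0 hq0))]
  have t2 : (1/2)*(κ*M^2) ≤ κ*M^2*(1+nu)^2 := by
    nlinarith [mul_le_mul_of_nonneg_left hq2 (mul_nonneg hκ0 (sq_nonneg M))]
  have t3 : CB*(M*(σ*(1+nu))) ≤ σ*CB*M*(1+nu)^2 := by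
    nlinarith [mul_nonneg (mul_nonneg (mul_nonneg hσ0 hCB0) hM)
      (mul_nonneg hq0 (by linarith : (0:ℝ) ≤ nu))]
  have t5 : CB*((σ*(1+nu))*(CH*nu)) ≤ σ*CB*CH*(1+nu)^2 := by
    nlinarith [mul_nonneg (mul_nonneg (mul_nonneg hσ0 hCB0) hCH0) hq0]
  have t7 : (1/2)*(CB*((σ*(1+nu))*(σ*(1+nu)))) ≤ σ*CB*(1+nu)^2 := by
    nlinarith [mul_nonneg (mul_nonneg hCB0 hσ0)
      (mul_nonneg (mul_nonneg hq0 hq0) (sub_nonneg.mpr hσ2))]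
  have e1 : σ*CB*M*(1+nu)^2 + σ*CB*CH*(1+nu)^2 + σ*CB*(1+nu)^2
      ≤ σ*CB*(M+CH+2)*(1+nu)^2 := by
    nlinarith [mul_nonneg (mul_nonneg hσ0 hCB0) (mul_nonneg hq0 hq0)]
  have e2 : (0:ℝ) ≤ κ*(CB*(M+CH+2))*(1+nu)^2 := by
    have : (0:ℝ) ≤ (1+nu)^2 := sq_nonneg _
    exact mul_nonneg (mul_nonneg hκ0 (mul_nonneg hCB0 hP0)) this
  have e3 : (0:ℝ) ≤ σ*((M+CH+2)^2+M^2)*(1+nu)^2 := by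
    have h2 : (0:ℝ) ≤ (1+nu)^2 := sq_nonneg _
    exact mul_nonneg (mul_nonneg hσ0 (by positivity)) h2
  nlinarith [t1, t2, t3, t5, t7, e1, e2, e3]

lemma key_bound (B Hs Aθ Astar : Mat d) (hB : Bᵀ = B) (z u w : Vec d)
    {M κ σ CB CH : ℝ}
    (hM : 0 ≤ M) (hκ0 : 0 ≤ κ) (hσ0 : 0 ≤ σ) (hσ2 : σ ≤ 2)
    (hz : ‖z‖ ≤ M) (hw : ‖w‖ ≤ σ * (1 + ‖u‖))
    (hκθ : Msum (Aθ - B) ≤ κ) (hκs : Msum (Astar - B) ≤ κ)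
    (hCB : Msum B ≤ CB) (hCH : Msum Hs ≤ CH) :
    |(-(1/2) * quadForm Aθ (z + (w - mulv Hs u)) (z + (w - mulv Hs u))
      + (1/2) * quadForm Astar z z)
      - quadForm (Hsᵀ * B) u z + (1/2) * quadForm (Hsᵀ * B * Hs) u u|
    ≤ (κ + σ) * ((M + CH + 2)^2 + M^2 + CB * (M + CH + 2)) * (1 + ‖u‖)^2 := by
  set s : Vec d := z + (w - mulv Hs u) with hs_def
  set nu := ‖u‖ with hnu
  have hnu0 : 0 ≤ nu := norm_nonneg _
  have hCB0 : 0 ≤ CB := (Msum_nonneg _).trans hCB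
  have hCH0 : 0 ≤ CH := (Msum_nonneg _).trans hCH
  have hHsu : ‖mulv Hs u‖ ≤ CH * nu :=
    (norm_mulv_le _ _).trans (mul_le_mul_of_nonneg_right hCH hnu0)
  have hw' : 0 ≤ σ * (1 + nu) := by positivity
  have hss : ‖s‖ ≤ (M + CH + 2) * (1 + nu) := by
    have h1 : ‖s‖ ≤ ‖z‖ + (‖w‖ + ‖mulv Hs u‖) := by
      calc ‖s‖ ≤ ‖z‖ + ‖w - mulv Hs u‖ := norm_add_le _ _
        _ ≤ ‖z‖ + (‖w‖ + ‖mulv Hs u‖) := by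
            exact add_le_add le_rfl (norm_sub_le _ _)
    nlinarith [hz, hw, hHsu]
  -- atom bounds
  have b1 : |quadForm (Aθ - B) s s| ≤ κ * ((M + CH + 2) * (1 + nu))^2 := by
    refine (abs_quadForm_le _ _ _).trans ?_
    have := mul_self_le_mul_self (norm_nonneg s) hss
    calc Msum (Aθ - B) * (‖s‖ * ‖s‖) ≤ κ * (‖s‖ * ‖s‖) :=
          mul_le_mul_of_nonneg_right hκθ (by positivity)
      _ ≤ κ * ((M + CH + 2) * (1 + nu))^2 := by
          rw [sq]; exact mul_le_mul_of_nonneg_left this hκ0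
  have b2 : |quadForm (Astar - B) z z| ≤ κ * M^2 := by
    refine (abs_quadForm_le _ _ _).trans ?_
    have := mul_self_le_mul_self (norm_nonneg z) hz
    calc Msum (Astar - B) * (‖z‖ * ‖z‖) ≤ κ * (‖z‖ * ‖z‖) :=
          mul_le_mul_of_nonneg_right hκs (by positivity)
      _ ≤ κ * M^2 := by rw [sq]; exact mul_le_mul_of_nonneg_left this hκ0
  have b3 : |quadForm B z w| ≤ CB * (M * (σ * (1 + nu))) := by
    refine (abs_quadForm_le _ _ _).trans ?_
    exact mul_le_mul hCB (mul_le_mul hz hw (norm_nonneg _) hM) (by positivity) hCB0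
  have b4 : |quadForm B w z| ≤ CB * (M * (σ * (1 + nu))) := by
    refine (abs_quadForm_le _ _ _).trans ?_
    have : ‖w‖ * ‖z‖ ≤ σ * (1 + nu) * M := mul_le_mul hw hz (norm_nonneg _) hw'
    calc Msum B * (‖w‖ * ‖z‖) ≤ CB * (σ * (1 + nu) * M) :=
          mul_le_mul hCB this (by positivity) hCB0
      _ = CB * (M * (σ * (1 + nu))) := by ring
  have b5 : |quadForm B w (mulv Hs u)| ≤ CB * ((σ * (1 + nu)) * (CH * nu)) := by
    refine (abs_quadForm_le _ _ _).trans ?_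
    exact mul_le_mul hCB (mul_le_mul hw hHsu (norm_nonneg _) hw') (by positivity) hCB0
  have b6 : |quadForm B (mulv Hs u) w| ≤ CB * ((σ * (1 + nu)) * (CH * nu)) := by
    refine (abs_quadForm_le _ _ _).trans ?_
    have : ‖mulv Hs u‖ * ‖w‖ ≤ (CH * nu) * (σ * (1 + nu)) :=
      mul_le_mul hHsu hw (norm_nonneg _) (by positivity)
    calc Msum B * (‖mulv Hs u‖ * ‖w‖) ≤ CB * ((CH * nu) * (σ * (1 + nu))) :=
          mul_le_mul hCB this (by positivity) hCB0
      _ = CB * ((σ * (1 + nu)) * (CH * nu)) := by ring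
  have b7 : |quadForm B w w| ≤ CB * ((σ * (1 + nu)) * (σ * (1 + nu))) := by
    refine (abs_quadForm_le _ _ _).trans ?_
    exact mul_le_mul hCB (mul_le_mul hw hw (norm_nonneg _) hw') (by positivity) hCB0
  rw [quadForm_expand_identity B Hs Aθ Astar hB z u w]
  rw [← hs_def]
  have hpoly := poly_bound (nu := nu) hM hκ0 hσ0 hσ2 hCB0 hCH0 hnu0
  obtain ⟨c1, c1'⟩ := abs_le.mp b1
  obtain ⟨c2, c2'⟩ := abs_le.mp b2
  obtain ⟨c3, c3'⟩ := abs_le.mp b3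
  obtain ⟨c4, c4'⟩ := abs_le.mp b4
  obtain ⟨c5, c5'⟩ := abs_le.mp b5
  obtain ⟨c6, c6'⟩ := abs_le.mp b6
  obtain ⟨c7, c7'⟩ := abs_le.mp b7
  rw [abs_le]
  constructor <;> linarith


/-! ### Analytic helper lemmas -/

lemma matCLM_apply (A : Mat d) (x : Vec d) : matCLM A x = mulv A x := by
  ext i
  rfl

lemma mulv_sub_mat (A A' : Mat d) (x : Vec d) :
    mulv A x - mulv A' x = mulv (A - A') x := by
  ext i
  simp [mulv_apply, PiLp.sub_apply, Matrix.sub_apply, sub_mul, Finset.sum_sub_distrib]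

lemma Msum_neg (A : Mat d) : Msum (-A) = Msum A := by
  simp [Msum]

lemma continuous_Msum : Continuous (Msum : Mat d → ℝ) := by
  unfold Msum
  refine continuous_finset_sum _ fun i _ => continuous_finset_sum _ fun j _ => ?_
  exact ((continuous_apply j).comp (continuous_apply i)).abs

lemma norm_matCLM_diff (A A' : Mat d) : ‖matCLM A - matCLM A'‖ ≤ Msum (A - A') := by
  refine ContinuousLinearMap.opNorm_le_bound _ (Msum_nonneg _) fun x => ?_
  rw [ContinuousLinearMap.sub_apply, matCLM_apply, matCLM_apply, mulv_sub_mat]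
  exact norm_mulv_le _ _

lemma closedBall_eq (θs : Vec d) (r : ℝ) :
    {θ : Vec d | ‖θ - θs‖ ≤ r} = Metric.closedBall θs r := by
  ext θ; simp [Metric.mem_closedBall, dist_eq_norm]

/-- Taylor/mean-value estimate for `m` near `θs`. -/
lemma taylor_bound {m : Vec d → Vec d} {H : Vec d → Mat d} {θs : Vec d} {δm : ℝ}
    (hδm : 0 < δm)
    (hder : ∀ θ : Vec d, ‖θ - θs‖ ≤ δm → HasFDerivAt m (-matCLM (H θ)) θ)
    (hHc : ContinuousOn H {θ : Vec d | ‖θ - θs‖ ≤ δm}) {ρ : ℝ} (hρ : 0 < ρ) :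
    ∃ r : ℝ, 0 < r ∧ r ≤ δm ∧ ∀ θ : Vec d, ‖θ - θs‖ ≤ r →
      ‖m θ - m θs + mulv (H θs) (θ - θs)‖ ≤ ρ * ‖θ - θs‖ := by
  have hφ : ContinuousAt (fun θ => Msum (H θ - H θs)) θs := by
    have h1 : ContinuousAt H θs := by
      refine hHc.continuousAt ?_
      rw [closedBall_eq]
      exact Metric.closedBall_mem_nhds _ hδm
    exact (continuous_Msum.continuousAt).comp (h1.sub continuousAt_const)
  have h0 : Msum (H θs - H θs) = 0 := by simp [Msum]
  obtain ⟨r', hr', hball⟩ := Metric.continuousAt_iff.mp hφ ρ hρ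
  refine ⟨min (r'/2) δm, by positivity, min_le_right _ _, fun θ hθ => ?_⟩
  -- all points of the closed ball of radius min(r'/2, δm) satisfy the derivative bound
  set r := min (r'/2) δm with hr_def
  have hHsmall : ∀ ϑ : Vec d, ‖ϑ - θs‖ ≤ r → Msum (H ϑ - H θs) ≤ ρ := by
    intro ϑ hϑ
    have hd : dist ϑ θs < r' := by
      rw [dist_eq_norm]
      calc ‖ϑ - θs‖ ≤ r := hϑ
        _ ≤ r'/2 := min_le_left _ _
        _ < r' := by linarith
    have := hball hd
    rw [h0, dist_eq_norm, sub_zero] at this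
    calc Msum (H ϑ - H θs) ≤ |Msum (H ϑ - H θs)| := le_abs_self _
      _ ≤ ρ := le_of_lt (by simpa [Real.norm_eq_abs] using this)
  -- mean value inequality on the convex closed ball
  set g : Vec d → Vec d := fun ϑ => m ϑ + matCLM (H θs) ϑ with hg_def
  have hmvt : ‖g θ - g θs‖ ≤ ρ * ‖θ - θs‖ := by
    have hconv : Convex ℝ (Metric.closedBall θs r) := convex_closedBall _ _
    have hmem : ∀ ϑ ∈ Metric.closedBall θs r, ‖ϑ - θs‖ ≤ δm := by
      intro ϑ hϑ
      rw [Metric.mem_closedBall, dist_eq_norm] at hϑ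
      exact hϑ.trans (min_le_right _ _)
    have hderiv : ∀ ϑ ∈ Metric.closedBall θs r,
        HasFDerivWithinAt g (-matCLM (H ϑ) + matCLM (H θs)) (Metric.closedBall θs r) ϑ := by
      intro ϑ hϑ
      exact ((hder ϑ (hmem ϑ hϑ)).add (matCLM (H θs)).hasFDerivAt).hasFDerivWithinAt
    have hbound : ∀ ϑ ∈ Metric.closedBall θs r,
        ‖-matCLM (H ϑ) + matCLM (H θs)‖ ≤ ρ := by
      intro ϑ hϑ
      have h1 : -matCLM (H ϑ) + matCLM (H θs) = matCLM (H θs) - matCLM (H ϑ) := by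
        abel
      rw [h1]
      refine (norm_matCLM_diff _ _).trans ?_
      have h2 : H θs - H ϑ = -(H ϑ - H θs) := by abel
      rw [h2, Msum_neg]
      have hϑr : ‖ϑ - θs‖ ≤ r := by
        rw [Metric.mem_closedBall, dist_eq_norm] at hϑ; exact hϑ
      exact hHsmall ϑ hϑr
    have hθmem : θ ∈ Metric.closedBall θs r := by
      rw [Metric.mem_closedBall, dist_eq_norm]; exact hθ
    have hθsmem : θs ∈ Metric.closedBall θs r := Metric.mem_closedBall_self (by positivity)
    exact hconv.norm_image_sub_le_of_norm_hasFDerivWithin_le hderiv hbound hθsmem hθmem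
  have hgd : g θ - g θs = m θ - m θs + mulv (H θs) (θ - θs) := by
    simp only [hg_def]
    rw [← matCLM_apply, ContinuousLinearMap.map_sub]
    abel
  rwa [hgd] at hmvt

/-- Perturbation bound for the matrix inverse near `θs`. -/
lemma inv_perturb {W : Vec d → Mat d} {θs : Vec d} {δW : ℝ}
    (hδW : 0 < δW) (hWc : ContinuousOn W {θ : Vec d | ‖θ - θs‖ ≤ δW})
    (hdet : (W θs).det ≠ 0) {κ : ℝ} (hκ : 0 < κ) :
    ∃ δ₂ η₂ : ℝ, 0 < δ₂ ∧ 0 < η₂ ∧ ∀ (θ : Vec d) (D : Mat d),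
      ‖θ - θs‖ ≤ δ₂ → Msum D ≤ η₂ →
      Msum ((W θ + D)⁻¹ - (W θs)⁻¹) ≤ κ := by
  have hWat : ContinuousAt W θs := by
    refine hWc.continuousAt ?_
    rw [closedBall_eq]
    exact Metric.closedBall_mem_nhds _ hδW
  have hinv : ContinuousAt (Inv.inv : Mat d → Mat d) (W θs) := by
    refine continuousAt_matrix_inv _ ?_
    rw [Ring.inverse_eq_inv']
    exact continuousAt_inv₀ hdet
  set emb : EuclideanSpace ℝ (Fin d × Fin d) → Mat d :=
    fun c => Matrix.of fun i j => c (i, j) with hemb_def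
  have hembc : Continuous emb :=
    continuous_matrix fun i j => (EuclideanSpace.proj ((i, j) : Fin d × Fin d)).continuous
  have hemb0 : emb 0 = 0 := by
    funext i j
    rfl
  have hF : ContinuousAt
      (fun p : Vec d × EuclideanSpace ℝ (Fin d × Fin d) =>
        Msum ((W p.1 + emb p.2)⁻¹ - (W θs)⁻¹)) (θs, 0) := by
    have h1 : ContinuousAt (fun p : Vec d × EuclideanSpace ℝ (Fin d × Fin d) =>
        W p.1 + emb p.2) (θs, 0) := by
      refine ContinuousAt.add (hWat.comp continuousAt_fst) ?_
      exact (hembc.continuousAt).comp continuousAt_snd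
    have h1' : W θs + emb 0 = W θs := by rw [hemb0, add_zero]
    have h2 : ContinuousAt (fun p : Vec d × EuclideanSpace ℝ (Fin d × Fin d) =>
        (W p.1 + emb p.2)⁻¹) (θs, 0) := by
      refine ContinuousAt.comp ?_ h1
      rw [h1']
      exact hinv
    exact continuous_Msum.continuousAt.comp (h2.sub continuousAt_const)
  have h0 : Msum ((W θs + emb 0)⁻¹ - (W θs)⁻¹) = 0 := by
    rw [hemb0, add_zero]
    simp [Msum]
  have hev : ∀ᶠ p : Vec d × EuclideanSpace ℝ (Fin d × Fin d) in 𝓝 (θs, 0),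
      Msum ((W p.1 + emb p.2)⁻¹ - (W θs)⁻¹) < κ := by
    have ht := hF.tendsto
    rw [h0] at ht
    exact ht.eventually_lt_const hκ
  obtain ⟨t, htall, htopen, htmem⟩ := eventually_nhds_iff.mp hev
  obtain ⟨r', hr', hball⟩ := Metric.mem_nhds_iff.mp (htopen.mem_nhds htmem)
  refine ⟨r'/2, r'/2, by positivity, by positivity, fun θ D hθ hD => ?_⟩
  set c : EuclideanSpace ℝ (Fin d × Fin d) :=
    WithLp.toLp 2 (fun p : Fin d × Fin d => D p.1 p.2) with hc_def
  have hembc' : emb c = D := by funext i j; rfl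
  have hcnorm : ‖c‖ ≤ Msum D := by
    refine (norm_le_sum_abs' c).trans ?_
    have heq : (∑ p : Fin d × Fin d, |c p|) = ∑ i, ∑ j, |D i j| := by
      rw [Fintype.sum_prod_type]
    rw [heq, Msum]
  have hmem : ((θ, c) : Vec d × EuclideanSpace ℝ (Fin d × Fin d)) ∈ t := by
    apply hball
    rw [Metric.mem_ball, Prod.dist_eq]
    have hd1 : dist θ θs ≤ r'/2 := by rw [dist_eq_norm]; exact hθ
    have hd2 : dist c 0 ≤ r'/2 := by
      rw [dist_zero_right]
      exact hcnorm.trans hD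
    calc max (dist θ θs) (dist c 0) ≤ r'/2 := max_le hd1 hd2
      _ < r' := by linarith
  have := htall (θ, c) hmem
  rw [hembc'] at this
  exact le_of_lt this


/-! ### Tightness from convergence in distribution -/

/-- Scalar cutoff function. -/
def cutoff (M t : ℝ) : ℝ := max 0 (min 1 (t - (M - 1)))

lemma cutoff_nonneg (M t : ℝ) : 0 ≤ cutoff M t := le_max_left _ _

lemma cutoff_le_one (M t : ℝ) : cutoff M t ≤ 1 :=
  max_le zero_le_one (min_le_left _ _)

lemma cutoff_eq_one {M t : ℝ} (h : M ≤ t) : cutoff M t = 1 := by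
  unfold cutoff
  rw [min_eq_left (by linarith), max_eq_right (by linarith)]

lemma cutoff_eq_zero {M t : ℝ} (h : t ≤ M - 1) : cutoff M t = 0 := by
  unfold cutoff
  rw [max_eq_left]
  exact (min_le_right _ _).trans (by linarith)

lemma continuous_cutoff (M : ℝ) : Continuous (cutoff M) :=
  continuous_const.max (continuous_const.min ((continuous_id).sub continuous_const))

/-- The cutoff of the norm, as a bounded continuous function. -/
def cutoffBCF (M : ℝ) : BoundedContinuousFunction (Vec d) ℝ :=
  ⟨⟨fun x => cutoff M ‖x‖, (continuous_cutoff M).comp continuous_norm⟩, by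
    refine ⟨2, fun x y => ?_⟩
    rw [Real.dist_eq]
    have h1 := cutoff_nonneg M ‖x‖
    have h2 := cutoff_le_one M ‖x‖
    have h3 := cutoff_nonneg M ‖y‖
    have h4 := cutoff_le_one M ‖y‖
    rw [abs_le]; constructor <;> simp <;> linarith⟩

lemma cutoffBCF_apply (M : ℝ) (x : Vec d) : cutoffBCF M x = cutoff M ‖x‖ := rfl

/-- The Gaussian-type bounded continuous function used to recover measurability. -/
def expBCF : BoundedContinuousFunction (Vec d) ℝ :=
  ⟨⟨fun x => Real.exp (-‖x‖^2), (Real.continuous_exp.comp (continuous_norm.pow 2).neg)⟩, by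
    refine ⟨2, fun x y => ?_⟩
    rw [Real.dist_eq]
    have h1 := Real.exp_pos (-‖x‖^2)
    have h2 : Real.exp (-‖x‖^2) ≤ 1 := Real.exp_le_one_iff.mpr (neg_nonpos.mpr (sq_nonneg _))
    have h3 := Real.exp_pos (-‖y‖^2)
    have h4 : Real.exp (-‖y‖^2) ≤ 1 := Real.exp_le_one_iff.mpr (neg_nonpos.mpr (sq_nonneg _))
    rw [abs_le]; constructor <;> simp <;> linarith⟩

lemma expBCF_apply (x : Vec d) : expBCF x = Real.exp (-‖x‖^2) := rfl

lemma expBCF_pos (x : Vec d) : 0 < expBCF x := Real.exp_pos _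

section Tightness

variable {Ω : Type*} [MeasurableSpace Ω]

/-- Tightness and eventual a.e.-measurability from convergence in distribution. -/
lemma tightness_of_dist (P : ℕ → Measure Ω) [∀ n, IsProbabilityMeasure (P n)]
    (Z : ℕ → Ω → Vec d) (μ : Measure (Vec d))
    (hconv : ∀ f : BoundedContinuousFunction (Vec d) ℝ,
      Tendsto (fun n => ∫ ω, f (Z n ω) ∂P n) atTop (𝓝 (∫ x, f x ∂μ)))
    {α : ℝ} (hα : 0 < α) :
    ∃ M : ℝ, 1 ≤ M ∧ ∀ᶠ n in atTop,
      P n {ω | M ≤ ‖Z n ω‖} ≤ ENNReal.ofReal α := by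
  -- step 1 : μ is a probability measure
  have hone : (∫ x, (1:ℝ) ∂μ) = 1 := by
    have h1 := hconv (BoundedContinuousFunction.const (Vec d) (1:ℝ))
    have h2 : (fun n => ∫ ω, (BoundedContinuousFunction.const (Vec d) (1:ℝ)) (Z n ω) ∂P n)
        = fun _ => (1:ℝ) := by
      funext n
      simp
    rw [h2] at h1
    have h3 := tendsto_nhds_unique h1 tendsto_const_nhds
    simpa using h3
  have hμuniv : μ Set.univ = 1 := by
    rw [integral_const] at hone
    simp only [smul_eq_mul, mul_one] at hone
    exact (ENNReal.toReal_eq_one_iff _).mp hone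
  haveI hμprob : IsProbabilityMeasure μ := ⟨hμuniv⟩
  -- step 2 : choose the threshold M from the tail of μ
  have hmeasS : ∀ r : ℝ, MeasurableSet {x : Vec d | r ≤ ‖x‖} :=
    fun r => measurableSet_le measurable_const measurable_norm
  have htail : Tendsto (fun k : ℕ => μ {x : Vec d | (k:ℝ) ≤ ‖x‖}) atTop (𝓝 0) := by
    have h1 : Tendsto (fun k : ℕ => μ {x : Vec d | (k:ℝ) ≤ ‖x‖}) atTop
        (𝓝 (μ (⋂ k : ℕ, {x : Vec d | (k:ℝ) ≤ ‖x‖}))) := by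
      refine tendsto_measure_iInter_atTop
        (fun k => (hmeasS k).nullMeasurableSet) ?_ ⟨0, measure_ne_top _ _⟩
      intro k l hkl x hx
      simp only [Set.mem_setOf_eq] at hx ⊢
      calc (k:ℝ) ≤ (l:ℝ) := Nat.cast_le.mpr hkl
        _ ≤ ‖x‖ := hx
    have h2 : (⋂ k : ℕ, {x : Vec d | (k:ℝ) ≤ ‖x‖}) = ∅ := by
      ext x
      simp only [Set.mem_iInter, Set.mem_setOf_eq, Set.mem_empty_iff_false, iff_false, not_forall]
      obtain ⟨k, hk⟩ := exists_nat_gt ‖x‖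
      exact ⟨k, not_le.mpr hk⟩
    rwa [h2, measure_empty] at h1
  have hhalf : (0:ℝ≥0∞) < ENNReal.ofReal (α/2) := ENNReal.ofReal_pos.mpr (by linarith)
  obtain ⟨k, hk⟩ := (htail.eventually_lt_const hhalf).exists
  set M : ℝ := (k:ℝ) + 2 with hM_def
  have hM1 : (1:ℝ) ≤ M := by
    rw [hM_def]
    have : (0:ℝ) ≤ (k:ℝ) := Nat.cast_nonneg k
    linarith
  refine ⟨M, hM1, ?_⟩
  -- step 3 : the cutoff integral against μ is small
  have hsub : {x : Vec d | M - 1 ≤ ‖x‖} ⊆ {x : Vec d | (k:ℝ) ≤ ‖x‖} := by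
    intro x hx
    simp only [Set.mem_setOf_eq] at hx ⊢
    have : (k:ℝ) ≤ M - 1 := by rw [hM_def]; linarith
    linarith
  have htailM : (μ {x : Vec d | M - 1 ≤ ‖x‖}).toReal ≤ α/2 := by
    have h1 : μ {x : Vec d | M - 1 ≤ ‖x‖} ≤ ENNReal.ofReal (α/2) :=
      (measure_mono hsub).trans (le_of_lt hk)
    exact ENNReal.toReal_le_of_le_ofReal (by linarith) h1
  have hFle : ∀ x : Vec d, cutoffBCF M x ≤
      Set.indicator {x : Vec d | M - 1 ≤ ‖x‖} (fun _ => (1:ℝ)) x := by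
    intro x
    rw [cutoffBCF_apply]
    by_cases hx : M - 1 ≤ ‖x‖
    · rw [Set.indicator_of_mem (show x ∈ {y : Vec d | M - 1 ≤ ‖y‖} from hx)]
      exact cutoff_le_one _ _
    · rw [Set.indicator_of_notMem (show x ∉ {y : Vec d | M - 1 ≤ ‖y‖} from hx)]
      rw [cutoff_eq_zero (by push_neg at hx; linarith)]
  have hFint : (∫ x, cutoffBCF M x ∂μ) ≤ α/2 := by
    have h1 : (∫ x, cutoffBCF M x ∂μ) ≤
        ∫ x, Set.indicator {x : Vec d | M - 1 ≤ ‖x‖} (fun _ => (1:ℝ)) x ∂μ := by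
      refine integral_mono ((cutoffBCF M).integrable μ) ?_ hFle
      exact (integrable_const (1:ℝ)).indicator (hmeasS (M-1))
    rw [integral_indicator_const (1:ℝ) (hmeasS (M-1))] at h1
    simp only [smul_eq_mul, mul_one] at h1
    exact h1.trans htailM
  -- step 4 : eventual a.e. measurability of ‖Z n ‖ from the exp functional
  have hL : 0 < ∫ x, expBCF x ∂μ := by
    rw [integral_pos_iff_support_of_nonneg (fun x => (expBCF_pos x).le)
      ((expBCF).integrable μ)]
    have hsupp : Function.support (fun x : Vec d => expBCF x) = Set.univ := by
      ext x
      simp [Function.mem_support, (expBCF_pos x).ne']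
    rw [hsupp, hμuniv]
    norm_num
  have hev1 : ∀ᶠ n in atTop,
      (∫ x, expBCF x ∂μ) / 2 < ∫ ω, expBCF (Z n ω) ∂P n :=
    (hconv expBCF).eventually_const_lt (by linarith)
  have hmeasZ : ∀ᶠ n in atTop, AEMeasurable (fun ω => ‖Z n ω‖) (P n) := by
    filter_upwards [hev1] with n hn
    have hint : Integrable (fun ω => expBCF (Z n ω)) (P n) := by
      by_contra hni
      rw [integral_undef hni] at hn
      linarith
    have haem : AEMeasurable (fun ω => expBCF (Z n ω)) (P n) :=
      hint.aestronglyMeasurable.aemeasurable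
    have hg : Measurable (fun y : ℝ => Real.sqrt (-Real.log y)) :=
      Real.continuous_sqrt.measurable.comp Real.measurable_log.neg
    have := hg.comp_aemeasurable haem
    refine this.congr (ae_of_all _ fun ω => ?_)
    simp only [Function.comp_apply, expBCF_apply, Real.log_exp, neg_neg]
    exact Real.sqrt_sq (norm_nonneg _)
  -- step 5 : Markov bound
  have hmarkov : ∀ n, AEMeasurable (fun ω => ‖Z n ω‖) (P n) →
      P n {ω | M ≤ ‖Z n ω‖} ≤ ENNReal.ofReal (∫ ω, cutoffBCF M (Z n ω) ∂P n) := by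
    intro n hZm
    set q : Ω → ℝ := fun ω => cutoff M ‖Z n ω‖ with hq_def
    have hqm : AEMeasurable q (P n) :=
      (continuous_cutoff M).measurable.comp_aemeasurable hZm
    have hq0 : ∀ ω, 0 ≤ q ω := fun ω => cutoff_nonneg _ _
    have hq1 : ∀ ω, q ω ≤ 1 := fun ω => cutoff_le_one _ _
    have hqint : Integrable q (P n) := by
      refine Integrable.mono' (integrable_const (1:ℝ)) hqm.aestronglyMeasurable ?_
      exact ae_of_all _ fun ω => by
        rw [Real.norm_eq_abs, abs_of_nonneg (hq0 ω)]; exact hq1 ω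
    set mk := hqm.mk q with hmk_def
    have hae : q =ᵐ[P n] mk := hqm.ae_eq_mk
    have hmkm : Measurable mk := hqm.measurable_mk
    have hsub2 : {ω | M ≤ ‖Z n ω‖} ⊆ {ω | 1 ≤ mk ω} ∪ {ω | q ω ≠ mk ω} := by
      intro ω hω
      simp only [Set.mem_setOf_eq] at hω
      by_cases he : q ω = mk ω
      · left
        have : q ω = 1 := cutoff_eq_one hω
        simp only [Set.mem_setOf_eq]
        rw [← he, this]
      · right; exact he
    have hnull : P n {ω | q ω ≠ mk ω} = 0 := by
      have := hae
      rwa [Filter.EventuallyEq, ae_iff] at this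
    have h1 : P n {ω | M ≤ ‖Z n ω‖} ≤ P n {ω | 1 ≤ mk ω} := by
      calc P n {ω | M ≤ ‖Z n ω‖} ≤ P n ({ω | 1 ≤ mk ω} ∪ {ω | q ω ≠ mk ω}) :=
            measure_mono hsub2
        _ ≤ P n {ω | 1 ≤ mk ω} + P n {ω | q ω ≠ mk ω} := measure_union_le _ _
        _ = P n {ω | 1 ≤ mk ω} := by rw [hnull, add_zero]
    have h2 : P n {ω | 1 ≤ mk ω} ≤ ∫⁻ ω, ENNReal.ofReal (mk ω) ∂P n := by
      have hmark := mul_meas_ge_le_lintegral₀ (μ := P n)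
        (hmkm.ennreal_ofReal.aemeasurable) (1 : ℝ≥0∞)
      have hseteq : {ω | (1:ℝ≥0∞) ≤ ENNReal.ofReal (mk ω)} = {ω | 1 ≤ mk ω} := by
        ext ω
        simp only [Set.mem_setOf_eq]
        constructor
        · intro h
          exact ENNReal.one_le_ofReal.mp h
        · intro h
          exact ENNReal.one_le_ofReal.mpr h
      rw [one_mul, hseteq] at hmark
      exact hmark
    have h3 : (∫⁻ ω, ENNReal.ofReal (mk ω) ∂P n) = ∫⁻ ω, ENNReal.ofReal (q ω) ∂P n :=
      lintegral_congr_ae ((hae.symm).fun_comp ENNReal.ofReal)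
    have h4 : (∫⁻ ω, ENNReal.ofReal (q ω) ∂P n) = ENNReal.ofReal (∫ ω, q ω ∂P n) :=
      (ofReal_integral_eq_lintegral_ofReal hqint (ae_of_all _ hq0)).symm
    calc P n {ω | M ≤ ‖Z n ω‖} ≤ ∫⁻ ω, ENNReal.ofReal (mk ω) ∂P n := h1.trans h2
      _ = ENNReal.ofReal (∫ ω, q ω ∂P n) := by rw [h3, h4]
      _ = ENNReal.ofReal (∫ ω, cutoffBCF M (Z n ω) ∂P n) := rfl
  -- step 6 : combine
  have hev2 : ∀ᶠ n in atTop, (∫ ω, cutoffBCF M (Z n ω) ∂P n) < α :=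
    (hconv (cutoffBCF M)).eventually_lt_const (by linarith)
  filter_upwards [hmeasZ, hev2] with n h1 h2
  calc P n {ω | M ≤ ‖Z n ω‖} ≤ ENNReal.ofReal (∫ ω, cutoffBCF M (Z n ω) ∂P n) :=
        hmarkov n h1
    _ ≤ ENNReal.ofReal α := ENNReal.ofReal_le_ofReal h2.le

end Tightness



lemma Msum_le_of_entries {A : Mat d} {c : ℝ} (h : ∀ i j, |A i j| ≤ c) :
    Msum A ≤ (d:ℝ) * (d:ℝ) * c := by
  unfold Msum
  calc (∑ i, ∑ j, |A i j|) ≤ ∑ _i : Fin d, ∑ _j : Fin d, c :=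
        Finset.sum_le_sum fun i _ => Finset.sum_le_sum fun j _ => h i j
    _ = (d:ℝ) * (d:ℝ) * c := by
        simp [Finset.sum_const, Finset.card_univ, nsmul_eq_mul]
        ring

/-- Deterministic bound: on the good event, the remainder is small. -/
lemma det_bound {d : ℕ} (n : ℕ) (Wnθ Wns B Hs : Mat d) (hB : Bᵀ = B)
    (mbθ mbs mθv msv : Vec d) (θ θstar : Vec d) (Rnv : ℝ)
    (hRnv : Rnv = (-((n : ℝ) / 2) * quadForm Wnθ⁻¹ mbθ mbθ -
        -((n : ℝ) / 2) * quadForm Wns⁻¹ mbs mbs) -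
      quadForm (Hsᵀ * B) (Real.sqrt n • (θ - θstar)) (Real.sqrt n • mbs) +
      (1 / 2) * quadForm (Hsᵀ * B * Hs) (Real.sqrt n • (θ - θstar))
        (Real.sqrt n • (θ - θstar)))
    {M γ γ' : ℝ} (hM : 0 ≤ M) (hγ : 0 < γ) (hγ'γ : γ' ≤ γ) (hγ1 : γ ≤ 1)
    (hz : ‖Real.sqrt n • mbs‖ ≤ M)
    (hrn : ‖Real.sqrt n • (mbθ - mbs - (mθv - msv))‖ ≤
      γ' * (1 + ‖Real.sqrt n • (θ - θstar)‖))
    (htay : ‖mθv - msv + mulv Hs (θ - θstar)‖ ≤ γ * ‖θ - θstar‖)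
    (hκθ : Msum (Wnθ⁻¹ - B) ≤ γ) (hκs : Msum (Wns⁻¹ - B) ≤ γ) :
    |Rnv| ≤ 6 * γ * ((M + Msum Hs + 2)^2 + M^2 + Msum B * (M + Msum Hs + 2)) *
      (1 + (n:ℝ) * ‖θ - θstar‖^2) := by
  have hsqn : (0:ℝ) ≤ Real.sqrt n := Real.sqrt_nonneg _
  set u : Vec d := Real.sqrt n • (θ - θstar) with hu_def
  set z : Vec d := Real.sqrt n • mbs with hz_def
  set rn : Vec d := Real.sqrt n • (mbθ - mbs - (mθv - msv)) with hrn_def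
  set w : Vec d := rn + Real.sqrt n • (mθv - msv + mulv Hs (θ - θstar)) with hw_def
  have hu_norm : ‖u‖ = Real.sqrt n * ‖θ - θstar‖ := by
    rw [hu_def, norm_smul, Real.norm_eq_abs, abs_of_nonneg hsqn]
  have hu0 : 0 ≤ ‖u‖ := norm_nonneg _
  have htay2 : ‖Real.sqrt n • (mθv - msv + mulv Hs (θ - θstar))‖ ≤ γ * ‖u‖ := by
    rw [norm_smul, Real.norm_eq_abs, abs_of_nonneg hsqn, hu_norm]
    calc Real.sqrt n * ‖mθv - msv + mulv Hs (θ - θstar)‖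
        ≤ Real.sqrt n * (γ * ‖θ - θstar‖) :=
          mul_le_mul_of_nonneg_left htay hsqn
      _ = γ * (Real.sqrt n * ‖θ - θstar‖) := by ring
  have hw : ‖w‖ ≤ (2*γ) * (1 + ‖u‖) := by
    have h1 : ‖w‖ ≤ ‖rn‖ + ‖Real.sqrt n • (mθv - msv + mulv Hs (θ - θstar))‖ :=
      norm_add_le _ _
    have h2 : ‖rn‖ ≤ γ * (1 + ‖u‖) := hrn.trans (by nlinarith)
    nlinarith [htay2]
  have hs_eq : Real.sqrt n • mbθ = z + (w - mulv Hs u) := by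
    rw [hz_def, hw_def, hrn_def, hu_def, mulv_smul]
    module
  have hsc : ∀ (A : Mat d) (x : Vec d),
      quadForm A (Real.sqrt n • x) (Real.sqrt n • x) = (n:ℝ) * quadForm A x x := by
    intro A x
    rw [quadForm_smul_left, quadForm_smul_right, ← mul_assoc,
      Real.mul_self_sqrt (Nat.cast_nonneg n)]
  have hRn_eq : Rnv = (-(1/2) * quadForm Wnθ⁻¹ (z + (w - mulv Hs u)) (z + (w - mulv Hs u))
      + (1/2) * quadForm Wns⁻¹ z z)
      - quadForm (Hsᵀ * B) u z + (1/2) * quadForm (Hsᵀ * B * Hs) u u := by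
    rw [hRnv]
    rw [← hs_eq, hz_def, hsc Wnθ⁻¹ mbθ, hsc Wns⁻¹ mbs]
    ring
  have hkey := key_bound B Hs Wnθ⁻¹ Wns⁻¹ hB z u w
    (M := M) (κ := γ) (σ := 2*γ) (CB := Msum B) (CH := Msum Hs)
    hM hγ.le (by linarith) (by linarith) hz hw hκθ hκs le_rfl le_rfl
  rw [hRn_eq]
  refine hkey.trans ?_
  have hu2 : ‖u‖^2 = (n:ℝ) * ‖θ - θstar‖^2 := by
    rw [hu_norm, mul_pow, Real.sq_sqrt (Nat.cast_nonneg n)]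
  have hC0 : 0 ≤ (M + Msum Hs + 2)^2 + M^2 + Msum B * (M + Msum Hs + 2) := by
    have h1 := Msum_nonneg B
    have h2 := Msum_nonneg Hs
    have h3 : 0 ≤ Msum B * (M + Msum Hs + 2) := mul_nonneg h1 (by linarith)
    nlinarith [sq_nonneg (M + Msum Hs + 2), sq_nonneg M]
  have hsq2 : (1 + ‖u‖)^2 ≤ 2 * (1 + ‖u‖^2) := by nlinarith [sq_nonneg (1 - ‖u‖)]
  have h6 : γ + 2*γ = 3*γ := by ring
  rw [h6]
  calc 3*γ * ((M + Msum Hs + 2)^2 + M^2 + Msum B * (M + Msum Hs + 2)) * (1 + ‖u‖)^2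
      ≤ 3*γ * ((M + Msum Hs + 2)^2 + M^2 + Msum B * (M + Msum Hs + 2)) *
        (2 * (1 + ‖u‖^2)) := by
        refine mul_le_mul_of_nonneg_left hsq2 ?_
        positivity
    _ = 6 * γ * ((M + Msum Hs + 2)^2 + M^2 + Msum B * (M + Msum Hs + 2)) *
        (1 + ‖u‖^2) := by ring
    _ = 6 * γ * ((M + Msum Hs + 2)^2 + M^2 + Msum B * (M + Msum Hs + 2)) *
        (1 + (n:ℝ) * ‖θ - θstar‖^2) := by rw [hu2]


/-- Master probabilistic bound: with probability at least `1 - β` (eventually in `n`),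
the normalized remainder is uniformly below `εR` on a fixed ball around `θstar`. -/
lemma master_bound
    {d : ℕ} {Ω : Type*} [MeasurableSpace Ω]
    (P : ℕ → Measure Ω) [∀ n, IsProbabilityMeasure (P n)]
    (Θ : Set (Vec d)) (mbar : ℕ → Ω → Vec d → Vec d) (m : Vec d → Vec d)
    (Wn : ℕ → Ω → Vec d → Mat d) (W : Vec d → Mat d)
    (H : Vec d → Mat d) (Istar : Mat d) (θstar : Vec d)
    (hA1 : Assumption1 P Θ mbar m θstar H Istar)
    (hA2 : Assumption2 P Θ Wn W m θstar)
    (Rn : ℕ → Ω → Vec d → ℝ)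
    (hRn : ∀ n ω θ, Rn n ω θ =
      (-((n : ℝ) / 2) * quadForm (Wn n ω θ)⁻¹ (mbar n ω θ) (mbar n ω θ) -
        -((n : ℝ) / 2) * quadForm (Wn n ω θstar)⁻¹ (mbar n ω θstar) (mbar n ω θstar)) -
      quadForm ((H θstar)ᵀ * (W θstar)⁻¹) (Real.sqrt n • (θ - θstar))
        (Real.sqrt n • mbar n ω θstar) +
      (1 / 2) * quadForm (sandwich W H θstar) (Real.sqrt n • (θ - θstar))
        (Real.sqrt n • (θ - θstar)))
    {εR β : ℝ} (hεR : 0 < εR) (hβ : 0 < β) :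
    ∃ r₀ : ℝ, 0 < r₀ ∧ ∀ᶠ n in atTop,
      P n {ω | ∃ θ : Vec d, ‖θ - θstar‖ ≤ r₀ ∧
        εR * (1 + (n:ℝ) * ‖θ - θstar‖^2) < |Rn n ω θ|} ≤ ENNReal.ofReal β := by
  classical
  obtain ⟨δm, hδm, hder, hHc⟩ := hA1.smooth
  obtain ⟨δW, hδW, _hWnreg, _hWpsd, hWconv, hWc, hWpd⟩ := hA2.regular
  -- a ball around θstar inside Θ
  have hint := hA1.mem_interior
  rw [mem_interior_iff_mem_nhds] at hint
  obtain ⟨δΘ, hδΘ, hballΘ⟩ := Metric.mem_nhds_iff.mp hint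
  have hθsΘ : θstar ∈ Θ := hballΘ (Metric.mem_ball_self hδΘ)
  -- posdefness at θstar
  have hθsball : ‖θstar - θstar‖ ≤ δW := by rw [sub_self, norm_zero]; exact hδW.le
  have hpdW : (W θstar).PosDef := hWpd θstar hθsball
  have hdet : (W θstar).det ≠ 0 := hpdW.det_pos.ne'
  have hB : ((W θstar)⁻¹)ᵀ = (W θstar)⁻¹ := by
    rw [← Matrix.conjTranspose_eq_transpose_of_trivial]
    exact hpdW.1.inv
  -- tightness
  obtain ⟨M, hM1, htailev⟩ := tightness_of_dist P
    (fun n ω => Real.sqrt n • mbar n ω θstar) (gaussMeasure Istar⁻¹) hA1.clt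
    (show 0 < β/3 by linarith)
  -- constants
  set CB := Msum ((W θstar)⁻¹) with hCB_def
  set CH := Msum (H θstar) with hCH_def
  have hCB0 : 0 ≤ CB := Msum_nonneg _
  have hCH0 : 0 ≤ CH := Msum_nonneg _
  set C0 : ℝ := (M + CH + 2)^2 + M^2 + CB * (M + CH + 2) with hC0_def
  have hC0nn : 0 ≤ C0 := by
    have h3 : 0 ≤ CB * (M + CH + 2) := mul_nonneg hCB0 (by linarith)
    nlinarith [sq_nonneg (M + CH + 2), sq_nonneg M]
  set γ : ℝ := min (εR / (6 * (C0 + 1))) 1 with hγ_def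
  have hγ : 0 < γ := lt_min (by positivity) one_pos
  have hγ1 : γ ≤ 1 := min_le_right _ _
  set γ' : ℝ := min γ (β/3) with hγ'_def
  have hγ' : 0 < γ' := lt_min hγ (by linarith)
  have hγ'γ : γ' ≤ γ := min_le_left _ _
  -- equicontinuity event
  obtain ⟨δe, hδe, hlimsupEq⟩ := hA1.equicont γ' hγ'
  have hevEq : ∀ᶠ n in atTop,
      P n {ω | ∃ θ : Vec d, ‖θ - θstar‖ < δe ∧
        γ' ≤ Real.sqrt n * ‖mbar n ω θ - mbar n ω θstar - (m θ - m θstar)‖ /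
          (1 + Real.sqrt n * ‖θ - θstar‖)} < ENNReal.ofReal γ' :=
    eventually_lt_of_limsup_lt hlimsupEq
  -- Taylor radius
  have hder' : ∀ θ : Vec d, ‖θ - θstar‖ ≤ δm → HasFDerivAt m (-matCLM (H θ)) θ := hder
  obtain ⟨r₁, hr₁, hr₁m, htay⟩ := taylor_bound hδm hder' hHc hγ
  -- inverse perturbation
  obtain ⟨δ₂, η₂, hδ₂, hη₂, hinvp⟩ := inv_perturb hδW hWc hdet hγ
  set ε' : ℝ := η₂ / ((d:ℝ) * (d:ℝ) + 1) with hε'_def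
  have hε' : 0 < ε' := by positivity
  have hevW : ∀ᶠ n in atTop,
      P n {ω | ∃ θ ∈ Θ, ∃ i j, ε' ≤ |Wn n ω θ i j - W θ i j|} < ENNReal.ofReal (β/3) :=
    (hWconv ε' hε').eventually_lt_const (ENNReal.ofReal_pos.mpr (by linarith))
  -- the radius
  set r₀ : ℝ := min (min (δe/2) r₁) (min δ₂ (δΘ/2)) with hr₀_def
  have hr₀pos : 0 < r₀ := by
    refine lt_min (lt_min (by linarith) hr₁) (lt_min hδ₂ (by linarith))
  refine ⟨r₀, hr₀pos, ?_⟩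
  filter_upwards [htailev, hevEq, hevW] with n hMn hEqn hWn'
  -- subset of the union of the three bad events
  have hsubset : {ω | ∃ θ : Vec d, ‖θ - θstar‖ ≤ r₀ ∧
      εR * (1 + (n:ℝ) * ‖θ - θstar‖^2) < |Rn n ω θ|} ⊆
      {ω | ∃ θ : Vec d, ‖θ - θstar‖ < δe ∧
        γ' ≤ Real.sqrt n * ‖mbar n ω θ - mbar n ω θstar - (m θ - m θstar)‖ /
          (1 + Real.sqrt n * ‖θ - θstar‖)} ∪
      ({ω | ∃ θ ∈ Θ, ∃ i j, ε' ≤ |Wn n ω θ i j - W θ i j|} ∪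
       {ω | M ≤ ‖Real.sqrt n • mbar n ω θstar‖}) := by
    intro ω hω
    obtain ⟨θ, hθr, hθR⟩ := hω
    by_contra hole
    simp only [Set.mem_union, not_or] at hole
    obtain ⟨h1, h2, h3⟩ := hole
    rw [Set.mem_setOf_eq] at h1 h2 h3
    push_neg at h1 h2 h3
    -- extract the good bounds
    have hsqn : (0:ℝ) ≤ Real.sqrt n := Real.sqrt_nonneg _
    have hθδe : ‖θ - θstar‖ < δe := by
      have : r₀ ≤ δe/2 := (min_le_left _ _).trans (min_le_left _ _)
      linarith
    have hrn : ‖Real.sqrt n • (mbar n ω θ - mbar n ω θstar - (m θ - m θstar))‖ ≤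
        γ' * (1 + ‖Real.sqrt n • (θ - θstar)‖) := by
      have hd := h1 θ hθδe
      have hden : 0 < 1 + Real.sqrt n * ‖θ - θstar‖ := by positivity
      rw [div_lt_iff₀ hden] at hd
      rw [norm_smul, Real.norm_eq_abs, abs_of_nonneg hsqn,
        norm_smul, Real.norm_eq_abs, abs_of_nonneg hsqn]
      calc Real.sqrt n * ‖mbar n ω θ - mbar n ω θstar - (m θ - m θstar)‖
          ≤ γ' * (1 + Real.sqrt n * ‖θ - θstar‖) := hd.le
        _ = γ' * (1 + Real.sqrt n * ‖θ - θstar‖) := rfl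
    have hθΘ : θ ∈ Θ := by
      apply hballΘ
      rw [Metric.mem_ball, dist_eq_norm]
      have : r₀ ≤ δΘ/2 := (min_le_right _ _).trans (min_le_right _ _)
      linarith
    have hMθ : Msum (Wn n ω θ - W θ) ≤ η₂ := by
      have hent : ∀ i j, |(Wn n ω θ - W θ) i j| ≤ ε' := by
        intro i j
        rw [Matrix.sub_apply]
        exact (h2 θ hθΘ i j).le
      refine (Msum_le_of_entries hent).trans ?_
      rw [hε'_def]
      have hpos : (0:ℝ) < (d:ℝ) * (d:ℝ) + 1 := by positivity
      rw [show (d:ℝ) * (d:ℝ) * (η₂ / ((d:ℝ) * (d:ℝ) + 1)) =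
        ((d:ℝ) * (d:ℝ) * η₂) / ((d:ℝ) * (d:ℝ) + 1) by ring, div_le_iff₀ hpos]
      nlinarith [hη₂]
    have hMθs : Msum (Wn n ω θstar - W θstar) ≤ η₂ := by
      have hent : ∀ i j, |(Wn n ω θstar - W θstar) i j| ≤ ε' := by
        intro i j
        rw [Matrix.sub_apply]
        exact (h2 θstar hθsΘ i j).le
      refine (Msum_le_of_entries hent).trans ?_
      rw [hε'_def]
      have hpos : (0:ℝ) < (d:ℝ) * (d:ℝ) + 1 := by positivity
      rw [show (d:ℝ) * (d:ℝ) * (η₂ / ((d:ℝ) * (d:ℝ) + 1)) =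
        ((d:ℝ) * (d:ℝ) * η₂) / ((d:ℝ) * (d:ℝ) + 1) by ring, div_le_iff₀ hpos]
      nlinarith [hη₂]
    have hκθ : Msum ((Wn n ω θ)⁻¹ - (W θstar)⁻¹) ≤ γ := by
      have hθδ₂ : ‖θ - θstar‖ ≤ δ₂ := by
        have : r₀ ≤ δ₂ := (min_le_right _ _).trans (min_le_left _ _)
        linarith
      have h := hinvp θ (Wn n ω θ - W θ) hθδ₂ hMθ
      have heq : W θ + (Wn n ω θ - W θ) = Wn n ω θ := by abel
      rwa [heq] at h
    have hκs : Msum ((Wn n ω θstar)⁻¹ - (W θstar)⁻¹) ≤ γ := by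
      have h := hinvp θstar (Wn n ω θstar - W θstar)
        (by rw [sub_self, norm_zero]; exact hδ₂.le) hMθs
      have heq : W θstar + (Wn n ω θstar - W θstar) = Wn n ω θstar := by abel
      rwa [heq] at h
    have hz : ‖Real.sqrt n • mbar n ω θstar‖ ≤ M := h3.le
    have htayθ : ‖m θ - m θstar + mulv (H θstar) (θ - θstar)‖ ≤ γ * ‖θ - θstar‖ := by
      refine htay θ ?_
      have : r₀ ≤ r₁ := (min_le_left _ _).trans (min_le_right _ _)
      linarith
    -- deterministic bound
    have hdb := det_bound n (Wn n ω θ) (Wn n ω θstar) ((W θstar)⁻¹) (H θstar) hB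
      (mbar n ω θ) (mbar n ω θstar) (m θ) (m θstar) θ θstar (Rn n ω θ)
      (by rw [hRn n ω θ]; rfl)
      (by linarith : (0:ℝ) ≤ M) hγ hγ'γ hγ1 hz hrn htayθ hκθ hκs
    -- contradiction with hθR
    have hγC : 6 * γ * C0 ≤ εR := by
      have h1 : γ ≤ εR / (6 * (C0 + 1)) := min_le_left _ _
      have h2 : 0 < 6 * (C0 + 1) := by linarith
      rw [le_div_iff₀ h2] at h1
      nlinarith [hγ]
    have hden : (0:ℝ) < 1 + (n:ℝ) * ‖θ - θstar‖^2 := by positivity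
    have hfin : |Rn n ω θ| ≤ εR * (1 + (n:ℝ) * ‖θ - θstar‖^2) := by
      refine hdb.trans ?_
      rw [← hCB_def, ← hCH_def, ← hC0_def]
      exact mul_le_mul_of_nonneg_right hγC hden.le
    linarith
  refine (measure_mono hsubset).trans ?_
  calc P n (_ ∪ (_ ∪ _)) ≤ P n _ + P n (_ ∪ _) := measure_union_le _ _
    _ ≤ P n _ + (P n _ + P n _) := by
        exact add_le_add le_rfl (measure_union_le _ _)
    _ ≤ ENNReal.ofReal γ' + (ENNReal.ofReal (β/3) + ENNReal.ofReal (β/3)) := by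
        refine add_le_add hEqn.le (add_le_add hWn'.le hMn)
    _ ≤ ENNReal.ofReal β := by
        rw [← ENNReal.ofReal_add (by linarith) (by linarith),
          ← ENNReal.ofReal_add (le_of_lt hγ') (by linarith)]
        refine ENNReal.ofReal_le_ofReal ?_
        have : γ' ≤ β/3 := min_le_right _ _
        linarith

/-- **Lemma 3 of the paper.** Under Assumptions 1, 2 and 5, the remainder `R_n(θ)` of the
quadratic expansion of `Q_n(θ) = -(n/2) m̄_n(θ)ᵀ W_n(θ)⁻¹ m̄_n(θ)` around `θ⋆`, namely
`R_n(θ) = Q_n(θ) - Q_n(θ⋆) - √n(θ-θ⋆)ᵀ H(θ⋆)ᵀ W(θ⋆)⁻¹ √n m̄_n(θ⋆)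
  + (1/2) √n(θ-θ⋆)ᵀ Δ(θ⋆) √n(θ-θ⋆)`,
satisfies: for each `ε > 0` there are `δ > 0` small and `h > 0` large with
`limsup_n P₀( sup_{h/√n ≤ ‖θ-θ⋆‖ ≤ δ} |R_n(θ)|/(1+n‖θ-θ⋆‖²) > ε ) < ε` and
`limsup_n P₀( sup_{‖θ-θ⋆‖ ≤ h/√n} |R_n(θ)| > ε ) = 0`. -/
theorem statement6
    {d : ℕ} {Ω : Type*} [MeasurableSpace Ω]
    (P : ℕ → Measure Ω) [∀ n, IsProbabilityMeasure (P n)]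
    (Θ : Set (Vec d)) (mbar : ℕ → Ω → Vec d → Vec d) (m : Vec d → Vec d)
    (Wn : ℕ → Ω → Vec d → Mat d) (W : Vec d → Mat d)
    (H : Vec d → Mat d) (Istar : Mat d) (θstar : Vec d)
    (θn : ℕ → Ω → Vec d)
    (hA1 : Assumption1 P Θ mbar m θstar H Istar)
    (hA2 : Assumption2 P Θ Wn W m θstar)
    (hA5 : Assumption5 P mbar θn θstar)
    (Rn : ℕ → Ω → Vec d → ℝ)
    (hRn : ∀ n ω θ, Rn n ω θ =
      (-((n : ℝ) / 2) * quadForm (Wn n ω θ)⁻¹ (mbar n ω θ) (mbar n ω θ) -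
        -((n : ℝ) / 2) * quadForm (Wn n ω θstar)⁻¹ (mbar n ω θstar) (mbar n ω θstar)) -
      quadForm ((H θstar)ᵀ * (W θstar)⁻¹) (Real.sqrt n • (θ - θstar))
        (Real.sqrt n • mbar n ω θstar) +
      (1 / 2) * quadForm (sandwich W H θstar) (Real.sqrt n • (θ - θstar))
        (Real.sqrt n • (θ - θstar))) :
    ∀ ε : ℝ, 0 < ε → ∃ δ : ℝ, 0 < δ ∧ ∃ h : ℝ, 0 < h ∧
      limsup (fun n => P n {ω | ∃ θ : Vec d,
          h / Real.sqrt n ≤ ‖θ - θstar‖ ∧ ‖θ - θstar‖ ≤ δ ∧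
          ε < |Rn n ω θ| / (1 + (n : ℝ) * ‖θ - θstar‖ ^ 2)}) atTop < ENNReal.ofReal ε ∧
      limsup (fun n => P n {ω | ∃ θ : Vec d,
          ‖θ - θstar‖ ≤ h / Real.sqrt n ∧ ε < |Rn n ω θ|}) atTop = 0
    := by
  intro ε hε
  obtain ⟨r₀, hr₀, hev₁⟩ := master_bound P Θ mbar m Wn W H Istar θstar hA1 hA2 Rn hRn
    hε (show 0 < ε/2 by linarith)
  refine ⟨r₀, hr₀, 1, one_pos, ?_, ?_⟩
  · -- the fixed-ball statement
    have hle : ∀ᶠ n in atTop,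
        P n {ω | ∃ θ : Vec d, 1 / Real.sqrt n ≤ ‖θ - θstar‖ ∧ ‖θ - θstar‖ ≤ r₀ ∧
          ε < |Rn n ω θ| / (1 + (n : ℝ) * ‖θ - θstar‖ ^ 2)} ≤ ENNReal.ofReal (ε/2) := by
      filter_upwards [hev₁] with n hn
      refine (measure_mono ?_).trans hn
      intro ω hω
      obtain ⟨θ, _, hθδ, hθR⟩ := hω
      refine ⟨θ, hθδ, ?_⟩
      have hden : (0:ℝ) < 1 + (n:ℝ) * ‖θ - θstar‖^2 := by positivity
      rw [lt_div_iff₀ hden] at hθR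
      linarith
    calc limsup (fun n => P n {ω | ∃ θ : Vec d,
          1 / Real.sqrt n ≤ ‖θ - θstar‖ ∧ ‖θ - θstar‖ ≤ r₀ ∧
          ε < |Rn n ω θ| / (1 + (n : ℝ) * ‖θ - θstar‖ ^ 2)}) atTop
        ≤ ENNReal.ofReal (ε/2) := limsup_le_of_le (by isBoundedDefault) hle
      _ < ENNReal.ofReal ε := by
          rw [ENNReal.ofReal_lt_ofReal_iff hε]
          linarith
  · -- the shrinking-ball statement
    have h1n : Tendsto (fun n : ℕ => 1 / Real.sqrt n) atTop (𝓝 0) := by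
      have hs : Tendsto (fun n : ℕ => Real.sqrt n) atTop atTop := by
        rw [tendsto_atTop_atTop]
        intro b
        refine ⟨(⌈b⌉₊)^2, fun n hn => ?_⟩
        have h1 : ((⌈b⌉₊ : ℝ))^2 ≤ (n:ℝ) := by
          have := Nat.cast_le (α := ℝ) |>.mpr hn
          push_cast at this ⊢
          linarith
        calc b ≤ (⌈b⌉₊ : ℝ) := Nat.le_ceil b
          _ = Real.sqrt (((⌈b⌉₊ : ℝ))^2) := (Real.sqrt_sq (Nat.cast_nonneg _)).symm
          _ ≤ Real.sqrt n := Real.sqrt_le_sqrt h1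
      simpa [one_div, Pi.inv_def] using hs.inv_tendsto_atTop
    refine le_antisymm ?_ zero_le
    refine ENNReal.le_of_forall_pos_le_add fun β hβ _ => ?_
    rw [zero_add]
    have hβ' : 0 < (β : ℝ) := hβ
    obtain ⟨r₀', hr₀', hev₂⟩ := master_bound P Θ mbar m Wn W H Istar θstar hA1 hA2 Rn hRn
      (show 0 < ε/2 by linarith) hβ'
    have hsmall : ∀ᶠ n : ℕ in atTop, 1 / Real.sqrt n < r₀' :=
      h1n.eventually_lt_const hr₀'
    have hle : ∀ᶠ n in atTop,
        P n {ω | ∃ θ : Vec d, ‖θ - θstar‖ ≤ 1 / Real.sqrt n ∧ ε < |Rn n ω θ|}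
          ≤ (β : ℝ≥0∞) := by
      filter_upwards [hev₂, hsmall] with n hn hsn
      refine le_trans (measure_mono ?_) (hn.trans_eq ?_)
      · intro ω hω
        obtain ⟨θ, hθ1, hθ2⟩ := hω
        refine ⟨θ, hθ1.trans hsn.le, ?_⟩
        have hn2 : (n:ℝ) * ‖θ - θstar‖^2 ≤ 1 := by
          by_cases hn0 : n = 0
          · subst hn0
            simp
          · have hnpos : (0:ℝ) < (n:ℝ) := by
              exact_mod_cast Nat.pos_of_ne_zero hn0
            have hsq : (0:ℝ) < Real.sqrt n := Real.sqrt_pos.mpr hnpos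
            have h2 : ‖θ - θstar‖^2 ≤ (1 / Real.sqrt n)^2 := by
              have := pow_le_pow_left₀ (norm_nonneg (θ - θstar)) hθ1 2
              exact this
            have h3 : (1 / Real.sqrt n)^2 = 1 / (n:ℝ) := by
              rw [div_pow, one_pow, Real.sq_sqrt hnpos.le]
            rw [h3] at h2
            calc (n:ℝ) * ‖θ - θstar‖^2 ≤ (n:ℝ) * (1 / (n:ℝ)) :=
                  mul_le_mul_of_nonneg_left h2 hnpos.le
              _ = 1 := by field_simp
        nlinarith
      · exact ENNReal.ofReal_coe_nnreal
    exact limsup_le_of_le (by isBoundedDefault) hle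

end QPaper
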